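/- Let F be a CNF formula over variables q1,…,qn partitioned into k parts by part:Φ→{1,…,k} with targets tg:{1,…,k}→ℕ. In the 1-safe Petri net constructed from this p-Pw-Sat instance, the target marking (a token exactly in places s and g) is reachable from the initial marking iff there is a satisfying assignment of F that sets exactly tg(r) variables to true in each part r. -/
import Mathlib


/-- A Petri net: places `P`, transitions `T`, incidence functions. -/
structure PetriNet (P T : Type) where
  Pre : P → T → ℕ
  Post : P → T → ℕ

variable {P T : Type}

def enabled (N : PetriNet P T) (M : P → ℕ) (t : T) : Prop := ∀ p, N.Pre p t ≤ M p

def fire (N : PetriNet P T) (M : P → ℕ) (t : T) : P → ℕ :=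
  fun p => M p - N.Pre p t + N.Post p t

def step (N : PetriNet P T) (M M' : P → ℕ) : Prop :=
  ∃ t, enabled N M t ∧ M' = fire N M t

def reachable (N : PetriNet P T) (M0 M : P → ℕ) : Prop :=
  Relation.ReflTransGen (step N) M0 M

/-- `1`-safety: every reachable marking has at most one token per place. -/
def oneSafe (N : PetriNet P T) (M0 : P → ℕ) : Prop :=
  ∀ M, reachable N M0 M → ∀ p, M p ≤ 1

def incident (N : PetriNet P T) (p : P) (t : T) : Prop := 1 ≤ N.Pre p t + N.Post p t


/-- Places of the net constructed from a `p-Pw-Sat` instance with `n` variables,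
`m` clauses and `k` parts. -/
inductive Pl (n m k : ℕ) : Type
  | q (i : Fin n) | x (i : Fin n) | xb (i : Fin n)
  | tup (r : Fin k) | fup (r : Fin k)
  | tu (r : Fin k) (c : ℕ) | fl (r : Fin k) (c : ℕ)
  | cl (j : Fin (m + 1)) | s | g
deriving DecidableEq

/-- Transitions of the constructed net. -/
inductive Tr (n m k : ℕ) : Type
  | t (i : Fin n) | f (i : Fin n) | td (i : Fin n) | fd (i : Fin n)
  | tc (r : Fin k) (c : ℕ) | fc (r : Fin k) (c : ℕ)
  | sat (j : Fin m) (i : Fin n) (b : Bool)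
  | fin
deriving DecidableEq

variable {n m k : ℕ}

/-- The number of variables in part `r`. -/
def numIn (part : Fin n → Fin k) (r : Fin k) : ℕ :=
  (Finset.univ.filter fun i => part i = r).card

/-- The place holding the `x`/`x̄` token of the literal `(i, b)`. -/
def litPl (i : Fin n) (b : Bool) : Pl n m k := if b then .x i else .xb i

/-- Input incidence of the constructed net. A transition that does not correspond to
a legal part of the construction (a clause-check for a literal not in the clause, or a
counter step beyond the end of a chain) is blocked by requiring two tokens at a place,
which never happens in the (1-safe) net. -/
def satPre (clause : Fin m → Finset (Fin n × Bool)) (part : Fin n → Fin k)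
    (tg : Fin k → ℕ) : Pl n m k → Tr n m k → ℕ := fun p τ =>
  match τ with
  | .t i => if p = .q i ∨ p = .s then 1 else 0
  | .f i => if p = .q i ∨ p = .s then 1 else 0
  | .td i => if p = .x i then 1 else 0
  | .fd i => if p = .xb i then 1 else 0
  | .tc r c => if c < tg r then (if p = .tup r ∨ p = .tu r c then 1 else 0)
      else (if p = .tu r c then 2 else 0)
  | .fc r c => if c < numIn part r - tg r then (if p = .fup r ∨ p = .fl r c then 1 else 0)
      else (if p = .fl r c then 2 else 0)
  | .sat j i b => if (i, b) ∈ clause j then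
        (if p = .cl j.castSucc ∨ p = litPl i b then 1 else 0)
      else (if p = .cl j.castSucc then 2 else 0)
  | .fin => if p = .cl (Fin.last m) ∨ (∃ r, p = .tu r (tg r)) ∨
        (∃ r, p = .fl r (numIn part r - tg r)) then 1 else 0

/-- Output incidence of the constructed net. -/
def satPost (clause : Fin m → Finset (Fin n × Bool)) (part : Fin n → Fin k)
    (tg : Fin k → ℕ) : Pl n m k → Tr n m k → ℕ := fun p τ =>
  match τ with
  | .t i => if p = .x i ∨ p = .tup (part i) then 1 else 0
  | .f i => if p = .xb i ∨ p = .fup (part i) then 1 else 0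
  | .td _ => 0
  | .fd _ => 0
  | .tc r c => if c < tg r then (if p = .tu r (c + 1) ∨ p = .s then 1 else 0) else 0
  | .fc r c => if c < numIn part r - tg r then
        (if p = .fl r (c + 1) ∨ p = .s then 1 else 0) else 0
  | .sat j i b => if (i, b) ∈ clause j then
        (if p = .cl j.succ ∨ p = litPl i b then 1 else 0) else 0
  | .fin => if p = .g then 1 else 0

/-- The Petri net constructed from the `p-Pw-Sat` instance. -/
def satNet (clause : Fin m → Finset (Fin n × Bool)) (part : Fin n → Fin k)
    (tg : Fin k → ℕ) : PetriNet (Pl n m k) (Tr n m k) :=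
  ⟨satPre clause part tg, satPost clause part tg⟩

/-- The initial marking: one token in each `q i`, in `s`, in each counter start
`tu r 0`, `fl r 0`, and in the first clause place. -/
def satM0 : Pl n m k → ℕ := fun p =>
  match p with
  | .q _ => 1
  | .s => 1
  | .tu _ c => if c = 0 then 1 else 0
  | .fl _ c => if c = 0 then 1 else 0
  | .cl j => if j = 0 then 1 else 0
  | _ => 0

/-- The final marking to be reached: a token exactly in `s` and `g`. -/
def satMtgt : Pl n m k → ℕ := fun p =>
  match p with
  | .s => 1
  | .g => 1
  | _ => 0

/-- The `p-Pw-Sat` instance is a Yes-instance: some assignment satisfies every clause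
and sets exactly `tg r` variables to true in each part `r`. -/
def GoodAssign (clause : Fin m → Finset (Fin n × Bool)) (part : Fin n → Fin k)
    (tg : Fin k → ℕ) : Prop :=
  ∃ a : Fin n → Bool,
    (∀ j : Fin m, ∃ l ∈ clause j, a l.1 = l.2) ∧
    (∀ r : Fin k, (Finset.univ.filter fun i => part i = r ∧ a i = true).card = tg r)

/-! ### Auxiliary machinery -/

abbrev VSt := Option (Bool × Bool)

/-- The value recorded in a variable state. -/
def vval (o : VSt) : Option Bool := o.map Prod.fst

/-- Configurations abstracting reachable markings. -/
structure Cfg (n m k : ℕ) where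
  v : Fin n → VSt
  ct : Fin k → ℕ
  cf : Fin k → ℕ
  cj : Fin (m + 1)
  fn : Bool

lemma Cfg.ext' {C C' : Cfg n m k} (h1 : C.v = C'.v) (h2 : C.ct = C'.ct)
    (h3 : C.cf = C'.cf) (h4 : C.cj = C'.cj) (h5 : C.fn = C'.fn) : C = C' := by
  cases C; cases C'; simp_all

def cntT (part : Fin n → Fin k) (v : Fin n → VSt) (r : Fin k) : ℕ :=
  (Finset.univ.filter fun i => part i = r ∧ vval (v i) = some true).card

def cntF (part : Fin n → Fin k) (v : Fin n → VSt) (r : Fin k) : ℕ :=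
  (Finset.univ.filter fun i => part i = r ∧ vval (v i) = some false).card

def pend (part : Fin n → Fin k) (v : Fin n → VSt) (ct cf : Fin k → ℕ) : ℕ :=
  (∑ r, (cntT part v r - ct r)) + ∑ r, (cntF part v r - cf r)

def cfgM (part : Fin n → Fin k) (C : Cfg n m k) : Pl n m k → ℕ := fun p =>
  match p with
  | .q i => if C.v i = none then 1 else 0
  | .x i => if C.v i = some (true, true) then 1 else 0
  | .xb i => if C.v i = some (false, true) then 1 else 0
  | .tup r => cntT part C.v r - C.ct r
  | .fup r => cntF part C.v r - C.cf r
  | .tu r c => if C.fn = false ∧ c = C.ct r then 1 else 0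
  | .fl r c => if C.fn = false ∧ c = C.cf r then 1 else 0
  | .cl j => if C.fn = false ∧ j = C.cj then 1 else 0
  | .s => 1 - pend part C.v C.ct C.cf
  | .g => if C.fn then 1 else 0

structure CfgOk (clause : Fin m → Finset (Fin n × Bool)) (part : Fin n → Fin k)
    (tg : Fin k → ℕ) (C : Cfg n m k) : Prop where
  ctle : ∀ r, C.ct r ≤ cntT part C.v r
  cfle : ∀ r, C.cf r ≤ cntF part C.v r
  cttg : ∀ r, C.ct r ≤ tg r
  cfng : ∀ r, C.cf r ≤ numIn part r - tg r
  pd : pend part C.v C.ct C.cf ≤ 1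
  clj : ∀ j : Fin m, j.castSucc < C.cj → ∃ l ∈ clause j, vval (C.v l.1) = some l.2
  fine : C.fn = true → (∀ r, C.ct r = tg r ∧ C.cf r = numIn part r - tg r) ∧ C.cj = Fin.last m

/-! ### Counting lemmas -/

lemma cntT_congr (part : Fin n → Fin k) {v v' : Fin n → VSt}
    (h : ∀ i, vval (v' i) = vval (v i)) (r : Fin k) :
    cntT part v' r = cntT part v r := by
  unfold cntT; congr 1; apply Finset.filter_congr; simp [h]

lemma cntF_congr (part : Fin n → Fin k) {v v' : Fin n → VSt}
    (h : ∀ i, vval (v' i) = vval (v i)) (r : Fin k) :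
    cntF part v' r = cntF part v r := by
  unfold cntF; congr 1; apply Finset.filter_congr; simp [h]

lemma cntT_update (part : Fin n → Fin k) {v : Fin n → VSt} {i : Fin n}
    (hv : v i = none) (b al : Bool) (r : Fin k) :
    cntT part (Function.update v i (some (b, al))) r
      = cntT part v r + (if part i = r ∧ b = true then 1 else 0) := by
  classical
  unfold cntT
  by_cases hc : part i = r ∧ b = true
  · rw [if_pos hc]
    have hset : (Finset.univ.filter fun i' => part i' = r ∧
        vval (Function.update v i (some (b, al)) i') = some true)
        = insert i (Finset.univ.filter fun i' => part i' = r ∧ vval (v i') = some true) := by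
      ext i'
      by_cases hii : i' = i <;>
        simp [hii, Function.update_apply, vval, hv, hc.1, hc.2]
    rw [hset, Finset.card_insert_of_notMem (by simp [vval, hv])]
  · rw [if_neg hc]
    have hset : (Finset.univ.filter fun i' => part i' = r ∧
        vval (Function.update v i (some (b, al)) i') = some true)
        = (Finset.univ.filter fun i' => part i' = r ∧ vval (v i') = some true) := by
      ext i'
      by_cases hii : i' = i <;>
        simp [hii, Function.update_apply, vval, hv]
      tauto
    rw [hset]; simp

lemma cntF_update (part : Fin n → Fin k) {v : Fin n → VSt} {i : Fin n}
    (hv : v i = none) (b al : Bool) (r : Fin k) :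
    cntF part (Function.update v i (some (b, al))) r
      = cntF part v r + (if part i = r ∧ b = false then 1 else 0) := by
  classical
  unfold cntF
  by_cases hc : part i = r ∧ b = false
  · rw [if_pos hc]
    have hset : (Finset.univ.filter fun i' => part i' = r ∧
        vval (Function.update v i (some (b, al)) i') = some false)
        = insert i (Finset.univ.filter fun i' => part i' = r ∧ vval (v i') = some false) := by
      ext i'
      by_cases hii : i' = i <;>
        simp [hii, Function.update_apply, vval, hv, hc.1, hc.2]
    rw [hset, Finset.card_insert_of_notMem (by simp [vval, hv])]
  · rw [if_neg hc]
    have hset : (Finset.univ.filter fun i' => part i' = r ∧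
        vval (Function.update v i (some (b, al)) i') = some false)
        = (Finset.univ.filter fun i' => part i' = r ∧ vval (v i') = some false) := by
      ext i'
      by_cases hii : i' = i <;>
        simp [hii, Function.update_apply, vval, hv]
      tauto
    rw [hset]; simp

lemma cnt_le (part : Fin n → Fin k) (v : Fin n → VSt) (r : Fin k) :
    cntT part v r + cntF part v r ≤ numIn part r := by
  classical
  unfold cntT cntF numIn
  rw [← Finset.card_union_of_disjoint]
  · apply Finset.card_le_card
    intro i hi
    simp only [Finset.mem_union, Finset.mem_filter] at hi ⊢
    tauto
  · rw [Finset.disjoint_left]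
    intro i hi hi'
    simp only [Finset.mem_filter] at hi hi'
    rw [hi.2.2] at hi'
    simp at hi'

lemma pend_zero {part : Fin n → Fin k} {v : Fin n → VSt} {ct cf : Fin k → ℕ}
    (h : pend part v ct cf = 0) (r : Fin k) :
    cntT part v r ≤ ct r ∧ cntF part v r ≤ cf r := by
  unfold pend at h
  have h1 : ∑ r, (cntT part v r - ct r) = 0 := by omega
  have h2 : ∑ r, (cntF part v r - cf r) = 0 := by omega
  have := Finset.sum_eq_zero_iff.mp h1 r (Finset.mem_univ r)
  have := Finset.sum_eq_zero_iff.mp h2 r (Finset.mem_univ r)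
  omega
/-! ### Transition lemmas -/

section Steps

variable {clause : Fin m → Finset (Fin n × Bool)} {part : Fin n → Fin k}
  {tg : Fin k → ℕ} {C : Cfg n m k}

lemma fire_t (hok : CfgOk clause part tg C) (i : Fin n)
    (hv : C.v i = none) (hp : pend part C.v C.ct C.cf = 0) :
    enabled (satNet clause part tg) (cfgM part C) (.t i)
    ∧ fire (satNet clause part tg) (cfgM part C) (.t i)
        = cfgM part ⟨Function.update C.v i (some (true, true)), C.ct, C.cf, C.cj, C.fn⟩
    ∧ CfgOk clause part tg ⟨Function.update C.v i (some (true, true)), C.ct, C.cf, C.cj, C.fn⟩ := by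
  have heqT : ∀ r, cntT part C.v r = C.ct r :=
    fun r => le_antisymm (pend_zero hp r).1 (hok.ctle r)
  have heqF : ∀ r, cntF part C.v r = C.cf r :=
    fun r => le_antisymm (pend_zero hp r).2 (hok.cfle r)
  have hT' : ∀ r, cntT part (Function.update C.v i (some (true, true))) r
      = C.ct r + (if part i = r then 1 else 0) := by
    intro r; rw [cntT_update part hv true true r, heqT]; simp
  have hF' : ∀ r, cntF part (Function.update C.v i (some (true, true))) r = C.cf r := by
    intro r; rw [cntF_update part hv true true r, heqF]; simp
  have hp' : pend part (Function.update C.v i (some (true, true))) C.ct C.cf = 1 := by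
    unfold pend
    have : ∀ r, cntF part (Function.update C.v i (some (true, true))) r - C.cf r = 0 := by
      intro r; rw [hF']; omega
    rw [Finset.sum_congr rfl (fun r _ => this r), Finset.sum_const_zero, add_zero]
    have : ∀ r ∈ Finset.univ, cntT part (Function.update C.v i (some (true, true))) r - C.ct r
        = if part i = r then 1 else 0 := by
      intro r _; rw [hT']; split_ifs <;> omega
    rw [Finset.sum_congr rfl this, Finset.sum_ite_eq]
    simp
  refine ⟨?_, ?_, ?_⟩
  · intro p
    cases p <;> simp only [satNet, satPre, cfgM] <;> split_ifs <;> simp_all <;> omega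
  · funext p
    cases p with
    | q i' =>
        simp only [satNet, fire, satPre, satPost, cfgM]
        by_cases hii : i' = i <;> simp [hii, Function.update_apply, hv]
    | x i' =>
        simp only [satNet, fire, satPre, satPost, cfgM]
        by_cases hii : i' = i <;> simp [hii, Function.update_apply, hv]
    | xb i' =>
        simp only [satNet, fire, satPre, satPost, cfgM]
        by_cases hii : i' = i <;> simp [hii, Function.update_apply, hv]
    | tup r =>
        simp only [satNet, fire, satPost, satPre, cfgM]
        rw [hT', heqT]
        split_ifs <;> first | omega | simp_all
    | fup r =>
        simp only [satNet, fire, satPost, satPre, cfgM]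
        rw [hF', heqF]
        simp
    | tu r c => simp [satNet, fire, satPre, satPost, cfgM]
    | fl r c => simp [satNet, fire, satPre, satPost, cfgM]
    | cl j => simp [satNet, fire, satPre, satPost, cfgM]
    | s =>
        simp only [satNet, fire, satPre, satPost, cfgM]
        rw [hp, hp']
        simp
    | g => simp [satNet, fire, satPre, satPost, cfgM]
  · refine ⟨?_, ?_, hok.cttg, hok.cfng, ?_, ?_, hok.fine⟩
    · intro r
      show C.ct r ≤ cntT part (Function.update C.v i (some (true, true))) r
      rw [hT']; omega
    · intro r
      show C.cf r ≤ cntF part (Function.update C.v i (some (true, true))) r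
      rw [hF']
    · show pend part (Function.update C.v i (some (true, true))) C.ct C.cf ≤ 1
      rw [hp']
    · intro j hj
      obtain ⟨l, hl, hval⟩ := hok.clj j hj
      refine ⟨l, hl, ?_⟩
      rcases eq_or_ne l.1 i with h | h
      · rw [h, hv] at hval; simp [vval] at hval
      · simpa [Function.update_apply, h] using hval

lemma fire_f (hok : CfgOk clause part tg C) (i : Fin n)
    (hv : C.v i = none) (hp : pend part C.v C.ct C.cf = 0) :
    enabled (satNet clause part tg) (cfgM part C) (.f i)
    ∧ fire (satNet clause part tg) (cfgM part C) (.f i)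
        = cfgM part ⟨Function.update C.v i (some (false, true)), C.ct, C.cf, C.cj, C.fn⟩
    ∧ CfgOk clause part tg ⟨Function.update C.v i (some (false, true)), C.ct, C.cf, C.cj, C.fn⟩ := by
  have heqT : ∀ r, cntT part C.v r = C.ct r :=
    fun r => le_antisymm (pend_zero hp r).1 (hok.ctle r)
  have heqF : ∀ r, cntF part C.v r = C.cf r :=
    fun r => le_antisymm (pend_zero hp r).2 (hok.cfle r)
  have hF' : ∀ r, cntF part (Function.update C.v i (some (false, true))) r
      = C.cf r + (if part i = r then 1 else 0) := by
    intro r; rw [cntF_update part hv false true r, heqF]; simp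
  have hT' : ∀ r, cntT part (Function.update C.v i (some (false, true))) r = C.ct r := by
    intro r; rw [cntT_update part hv false true r, heqT]; simp
  have hp' : pend part (Function.update C.v i (some (false, true))) C.ct C.cf = 1 := by
    unfold pend
    have h0 : ∀ r, cntT part (Function.update C.v i (some (false, true))) r - C.ct r = 0 := by
      intro r; rw [hT']; omega
    rw [Finset.sum_congr rfl (fun r _ => h0 r), Finset.sum_const_zero, zero_add]
    have : ∀ r ∈ Finset.univ, cntF part (Function.update C.v i (some (false, true))) r - C.cf r
        = if part i = r then 1 else 0 := by
      intro r _; rw [hF']; split_ifs <;> omega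
    rw [Finset.sum_congr rfl this, Finset.sum_ite_eq]
    simp
  refine ⟨?_, ?_, ?_⟩
  · intro p
    cases p <;> simp only [satNet, satPre, cfgM] <;> split_ifs <;> simp_all
  · funext p
    cases p with
    | q i' =>
        simp only [satNet, fire, satPre, satPost, cfgM]
        by_cases hii : i' = i <;> simp [hii, Function.update_apply, hv]
    | x i' =>
        simp only [satNet, fire, satPre, satPost, cfgM]
        by_cases hii : i' = i <;> simp [hii, Function.update_apply, hv]
    | xb i' =>
        simp only [satNet, fire, satPre, satPost, cfgM]
        by_cases hii : i' = i <;> simp [hii, Function.update_apply, hv]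
    | fup r =>
        simp only [satNet, fire, satPost, satPre, cfgM]
        rw [hF', heqF]
        split_ifs <;> first | omega | simp_all
    | tup r =>
        simp only [satNet, fire, satPost, satPre, cfgM]
        rw [hT', heqT]
        simp
    | tu r c => simp [satNet, fire, satPre, satPost, cfgM]
    | fl r c => simp [satNet, fire, satPre, satPost, cfgM]
    | cl j => simp [satNet, fire, satPre, satPost, cfgM]
    | s =>
        simp only [satNet, fire, satPre, satPost, cfgM]
        rw [hp, hp']
        simp
    | g => simp [satNet, fire, satPre, satPost, cfgM]
  · refine ⟨?_, ?_, hok.cttg, hok.cfng, ?_, ?_, hok.fine⟩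
    · intro r
      show C.ct r ≤ cntT part (Function.update C.v i (some (false, true))) r
      rw [hT']
    · intro r
      show C.cf r ≤ cntF part (Function.update C.v i (some (false, true))) r
      rw [hF']; omega
    · show pend part (Function.update C.v i (some (false, true))) C.ct C.cf ≤ 1
      rw [hp']
    · intro j hj
      obtain ⟨l, hl, hval⟩ := hok.clj j hj
      refine ⟨l, hl, ?_⟩
      rcases eq_or_ne l.1 i with h | h
      · rw [h, hv] at hval; simp [vval] at hval
      · simpa [Function.update_apply, h] using hval

lemma fire_td (hok : CfgOk clause part tg C) (i : Fin n)
    (hv : C.v i = some (true, true)) :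
    enabled (satNet clause part tg) (cfgM part C) (.td i)
    ∧ fire (satNet clause part tg) (cfgM part C) (.td i)
        = cfgM part ⟨Function.update C.v i (some (true, false)), C.ct, C.cf, C.cj, C.fn⟩
    ∧ CfgOk clause part tg ⟨Function.update C.v i (some (true, false)), C.ct, C.cf, C.cj, C.fn⟩ := by
  have hval : ∀ i', vval (Function.update C.v i (some (true, false)) i') = vval (C.v i') := by
    intro i'; rcases eq_or_ne i' i with h | h <;> simp [h, Function.update_apply, hv, vval]
  have hT' := fun r => cntT_congr part hval r
  have hF' := fun r => cntF_congr part hval r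
  have hp' : pend part (Function.update C.v i (some (true, false))) C.ct C.cf
      = pend part C.v C.ct C.cf := by
    unfold pend
    simp only [hT', hF']
  refine ⟨?_, ?_, ?_⟩
  · intro p
    cases p <;> simp only [satNet, satPre, cfgM] <;> split_ifs <;> simp_all
  · funext p
    cases p with
    | q i' =>
        simp only [satNet, fire, satPre, satPost, cfgM]
        by_cases hii : i' = i <;> simp [hii, Function.update_apply, hv]
    | x i' =>
        simp only [satNet, fire, satPre, satPost, cfgM]
        by_cases hii : i' = i <;> simp [hii, Function.update_apply, hv]
    | xb i' =>
        simp only [satNet, fire, satPre, satPost, cfgM]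
        by_cases hii : i' = i <;> simp [hii, Function.update_apply, hv]
    | tup r =>
        simp only [satNet, fire, satPre, satPost, cfgM]
        rw [hT' r]; simp
    | fup r =>
        simp only [satNet, fire, satPre, satPost, cfgM]
        rw [hF' r]; simp
    | tu r c => simp [satNet, fire, satPre, satPost, cfgM]
    | fl r c => simp [satNet, fire, satPre, satPost, cfgM]
    | cl j => simp [satNet, fire, satPre, satPost, cfgM]
    | s =>
        simp only [satNet, fire, satPre, satPost, cfgM]
        rw [hp']; simp
    | g => simp [satNet, fire, satPre, satPost, cfgM]
  · refine ⟨?_, ?_, hok.cttg, hok.cfng, ?_, ?_, hok.fine⟩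
    · intro r
      show C.ct r ≤ cntT part (Function.update C.v i (some (true, false))) r
      rw [hT' r]; exact hok.ctle r
    · intro r
      show C.cf r ≤ cntF part (Function.update C.v i (some (true, false))) r
      rw [hF' r]; exact hok.cfle r
    · show pend part (Function.update C.v i (some (true, false))) C.ct C.cf ≤ 1
      rw [hp']; exact hok.pd
    · intro j hj
      obtain ⟨l, hl, hvl⟩ := hok.clj j hj
      exact ⟨l, hl, (hval l.1).trans hvl⟩

lemma fire_fd (hok : CfgOk clause part tg C) (i : Fin n)
    (hv : C.v i = some (false, true)) :
    enabled (satNet clause part tg) (cfgM part C) (.fd i)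
    ∧ fire (satNet clause part tg) (cfgM part C) (.fd i)
        = cfgM part ⟨Function.update C.v i (some (false, false)), C.ct, C.cf, C.cj, C.fn⟩
    ∧ CfgOk clause part tg ⟨Function.update C.v i (some (false, false)), C.ct, C.cf, C.cj, C.fn⟩ := by
  have hval : ∀ i', vval (Function.update C.v i (some (false, false)) i') = vval (C.v i') := by
    intro i'; rcases eq_or_ne i' i with h | h <;> simp [h, Function.update_apply, hv, vval]
  have hT' := fun r => cntT_congr part hval r
  have hF' := fun r => cntF_congr part hval r
  have hp' : pend part (Function.update C.v i (some (false, false))) C.ct C.cf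
      = pend part C.v C.ct C.cf := by
    unfold pend
    simp only [hT', hF']
  refine ⟨?_, ?_, ?_⟩
  · intro p
    cases p <;> simp only [satNet, satPre, cfgM] <;> split_ifs <;> simp_all
  · funext p
    cases p with
    | q i' =>
        simp only [satNet, fire, satPre, satPost, cfgM]
        by_cases hii : i' = i <;> simp [hii, Function.update_apply, hv]
    | x i' =>
        simp only [satNet, fire, satPre, satPost, cfgM]
        by_cases hii : i' = i <;> simp [hii, Function.update_apply, hv]
    | xb i' =>
        simp only [satNet, fire, satPre, satPost, cfgM]
        by_cases hii : i' = i <;> simp [hii, Function.update_apply, hv]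
    | tup r =>
        simp only [satNet, fire, satPre, satPost, cfgM]
        rw [hT' r]; simp
    | fup r =>
        simp only [satNet, fire, satPre, satPost, cfgM]
        rw [hF' r]; simp
    | tu r c => simp [satNet, fire, satPre, satPost, cfgM]
    | fl r c => simp [satNet, fire, satPre, satPost, cfgM]
    | cl j => simp [satNet, fire, satPre, satPost, cfgM]
    | s =>
        simp only [satNet, fire, satPre, satPost, cfgM]
        rw [hp']; simp
    | g => simp [satNet, fire, satPre, satPost, cfgM]
  · refine ⟨?_, ?_, hok.cttg, hok.cfng, ?_, ?_, hok.fine⟩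
    · intro r
      show C.ct r ≤ cntT part (Function.update C.v i (some (false, false))) r
      rw [hT' r]; exact hok.ctle r
    · intro r
      show C.cf r ≤ cntF part (Function.update C.v i (some (false, false))) r
      rw [hF' r]; exact hok.cfle r
    · show pend part (Function.update C.v i (some (false, false))) C.ct C.cf ≤ 1
      rw [hp']; exact hok.pd
    · intro j hj
      obtain ⟨l, hl, hvl⟩ := hok.clj j hj
      exact ⟨l, hl, (hval l.1).trans hvl⟩

lemma fire_tc (hok : CfgOk clause part tg C) (r : Fin k) (c : ℕ)
    (hfn : C.fn = false) (hc : c = C.ct r) (hlt : c < tg r)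
    (hpnd : 1 ≤ cntT part C.v r - C.ct r) :
    enabled (satNet clause part tg) (cfgM part C) (.tc r c)
    ∧ fire (satNet clause part tg) (cfgM part C) (.tc r c)
        = cfgM part ⟨C.v, Function.update C.ct r (c + 1), C.cf, C.cj, C.fn⟩
    ∧ CfgOk clause part tg ⟨C.v, Function.update C.ct r (c + 1), C.cf, C.cj, C.fn⟩ := by
  have h1 : cntT part C.v r - C.ct r ≤ ∑ r', (cntT part C.v r' - C.ct r') :=
    Finset.single_le_sum (f := fun r' => cntT part C.v r' - C.ct r')
      (fun _ _ => Nat.zero_le _) (Finset.mem_univ r)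
  have h2 := hok.pd
  have hsum : pend part C.v C.ct C.cf = 1 := by
    unfold pend at h2 ⊢
    omega
  have hT1 : cntT part C.v r = C.ct r + 1 := by
    unfold pend at h2
    omega
  have herase : ∑ r' ∈ Finset.univ.erase r, (cntT part C.v r' - C.ct r') = 0 := by
    have h3 : cntT part C.v r - C.ct r
        + ∑ r' ∈ Finset.univ.erase r, (cntT part C.v r' - C.ct r')
        = ∑ r' : Fin k, (cntT part C.v r' - C.ct r') :=
      Finset.add_sum_erase _ (fun r' => cntT part C.v r' - C.ct r') (Finset.mem_univ r)
    unfold pend at hsum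
    omega
  have hTo : ∀ r', r' ≠ r → cntT part C.v r' - C.ct r' = 0 := by
    intro r' hr'
    exact Finset.sum_eq_zero_iff.mp herase r' (Finset.mem_erase.mpr ⟨hr', Finset.mem_univ r'⟩)
  have hFsum : ∑ r', (cntF part C.v r' - C.cf r') = 0 := by
    unfold pend at hsum; omega
  have hFo : ∀ r', cntF part C.v r' - C.cf r' = 0 := by
    intro r'
    exact Finset.sum_eq_zero_iff.mp hFsum r' (Finset.mem_univ r')
  have hp' : pend part C.v (Function.update C.ct r (c + 1)) C.cf = 0 := by
    unfold pend
    have hz : ∑ r', (cntT part C.v r' - Function.update C.ct r (c + 1) r') = 0 :=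
      Finset.sum_eq_zero (fun r' _ => by
        rcases eq_or_ne r' r with h | h
        · subst h; rw [Function.update_self]; omega
        · rw [Function.update_of_ne h]; exact hTo r' h)
    rw [hz, hFsum]
  refine ⟨?_, ?_, ?_⟩
  · intro p
    clear h1 h2 hsum herase hFsum hp'
    cases p <;> simp only [satNet, satPre, cfgM, if_pos hlt] <;>
      split_ifs <;> simp_all
  · funext p
    cases p with
    | q i' => simp [satNet, fire, satPre, satPost, cfgM, if_pos hlt]
    | x i' => simp [satNet, fire, satPre, satPost, cfgM, if_pos hlt]
    | xb i' => simp [satNet, fire, satPre, satPost, cfgM, if_pos hlt]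
    | tup r' =>
        simp only [satNet, fire, satPre, satPost, cfgM, if_pos hlt]
        rcases eq_or_ne r' r with h | h
        · subst h; simp [Function.update_self]; omega
        · simp [Function.update_of_ne h, h]
    | fup r' => simp [satNet, fire, satPre, satPost, cfgM, if_pos hlt]
    | tu r' c' =>
        simp only [satNet, fire, satPre, satPost, cfgM, if_pos hlt]
        rcases eq_or_ne r' r with h | h
        · subst h
          simp only [Function.update_self, hfn]
          split_ifs <;> simp_all <;> omega
        · simp only [Function.update_of_ne h, h]
          split_ifs <;> simp_all
    | fl r' c' => simp [satNet, fire, satPre, satPost, cfgM, if_pos hlt]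
    | cl j' => simp [satNet, fire, satPre, satPost, cfgM, if_pos hlt]
    | s =>
        simp only [satNet, fire, satPre, satPost, cfgM, if_pos hlt]
        rw [hsum, hp']
        simp
    | g => simp [satNet, fire, satPre, satPost, cfgM, if_pos hlt]
  · refine ⟨?_, hok.cfle, ?_, hok.cfng, ?_, hok.clj, ?_⟩
    · intro r'
      show Function.update C.ct r (c + 1) r' ≤ cntT part C.v r'
      rcases eq_or_ne r' r with h | h
      · subst h; rw [Function.update_self]; omega
      · rw [Function.update_of_ne h]; exact hok.ctle r'
    · intro r'
      show Function.update C.ct r (c + 1) r' ≤ tg r'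
      rcases eq_or_ne r' r with h | h
      · subst h; rw [Function.update_self]; omega
      · rw [Function.update_of_ne h]; exact hok.cttg r'
    · show pend part C.v (Function.update C.ct r (c + 1)) C.cf ≤ 1
      rw [hp']; omega
    · intro h; rw [hfn] at h; cases h

lemma fire_fc (hok : CfgOk clause part tg C) (r : Fin k) (c : ℕ)
    (hfn : C.fn = false) (hc : c = C.cf r) (hlt : c < numIn part r - tg r)
    (hpnd : 1 ≤ cntF part C.v r - C.cf r) :
    enabled (satNet clause part tg) (cfgM part C) (.fc r c)
    ∧ fire (satNet clause part tg) (cfgM part C) (.fc r c)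
        = cfgM part ⟨C.v, C.ct, Function.update C.cf r (c + 1), C.cj, C.fn⟩
    ∧ CfgOk clause part tg ⟨C.v, C.ct, Function.update C.cf r (c + 1), C.cj, C.fn⟩ := by
  have h1 : cntF part C.v r - C.cf r ≤ ∑ r', (cntF part C.v r' - C.cf r') :=
    Finset.single_le_sum (f := fun r' => cntF part C.v r' - C.cf r')
      (fun _ _ => Nat.zero_le _) (Finset.mem_univ r)
  have h2 := hok.pd
  have hsum : pend part C.v C.ct C.cf = 1 := by
    unfold pend at h2 ⊢
    omega
  have hF1 : cntF part C.v r = C.cf r + 1 := by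
    unfold pend at h2
    omega
  have herase : ∑ r' ∈ Finset.univ.erase r, (cntF part C.v r' - C.cf r') = 0 := by
    have h3 : cntF part C.v r - C.cf r
        + ∑ r' ∈ Finset.univ.erase r, (cntF part C.v r' - C.cf r')
        = ∑ r' : Fin k, (cntF part C.v r' - C.cf r') :=
      Finset.add_sum_erase _ (fun r' => cntF part C.v r' - C.cf r') (Finset.mem_univ r)
    unfold pend at hsum
    omega
  have hFo : ∀ r', r' ≠ r → cntF part C.v r' - C.cf r' = 0 := by
    intro r' hr'
    exact Finset.sum_eq_zero_iff.mp herase r' (Finset.mem_erase.mpr ⟨hr', Finset.mem_univ r'⟩)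
  have hTsum : ∑ r', (cntT part C.v r' - C.ct r') = 0 := by
    unfold pend at hsum; omega
  have hTo : ∀ r', cntT part C.v r' - C.ct r' = 0 := by
    intro r'
    exact Finset.sum_eq_zero_iff.mp hTsum r' (Finset.mem_univ r')
  have hp' : pend part C.v C.ct (Function.update C.cf r (c + 1)) = 0 := by
    unfold pend
    have hz : ∑ r', (cntF part C.v r' - Function.update C.cf r (c + 1) r') = 0 :=
      Finset.sum_eq_zero (fun r' _ => by
        rcases eq_or_ne r' r with h | h
        · subst h; rw [Function.update_self]; omega
        · rw [Function.update_of_ne h]; exact hFo r' h)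
    rw [hz, hTsum]
  refine ⟨?_, ?_, ?_⟩
  · intro p
    clear h1 h2 hsum herase hTsum hp'
    cases p <;> simp only [satNet, satPre, cfgM, if_pos hlt] <;>
      split_ifs <;> simp_all
  · funext p
    cases p with
    | q i' => simp [satNet, fire, satPre, satPost, cfgM, if_pos hlt]
    | x i' => simp [satNet, fire, satPre, satPost, cfgM, if_pos hlt]
    | xb i' => simp [satNet, fire, satPre, satPost, cfgM, if_pos hlt]
    | fup r' =>
        simp only [satNet, fire, satPre, satPost, cfgM, if_pos hlt]
        rcases eq_or_ne r' r with h | h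
        · subst h; simp [Function.update_self]; omega
        · simp [Function.update_of_ne h, h]
    | tup r' => simp [satNet, fire, satPre, satPost, cfgM, if_pos hlt]
    | fl r' c' =>
        simp only [satNet, fire, satPre, satPost, cfgM, if_pos hlt]
        rcases eq_or_ne r' r with h | h
        · subst h
          simp only [Function.update_self, hfn]
          split_ifs <;> simp_all <;> omega
        · simp only [Function.update_of_ne h, h]
          split_ifs <;> simp_all
    | tu r' c' => simp [satNet, fire, satPre, satPost, cfgM, if_pos hlt]
    | cl j' => simp [satNet, fire, satPre, satPost, cfgM, if_pos hlt]
    | s =>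
        simp only [satNet, fire, satPre, satPost, cfgM, if_pos hlt]
        rw [hsum, hp']
        simp
    | g => simp [satNet, fire, satPre, satPost, cfgM, if_pos hlt]
  · refine ⟨hok.ctle, ?_, hok.cttg, ?_, ?_, hok.clj, ?_⟩
    · intro r'
      show Function.update C.cf r (c + 1) r' ≤ cntF part C.v r'
      rcases eq_or_ne r' r with h | h
      · subst h; rw [Function.update_self]; omega
      · rw [Function.update_of_ne h]; exact hok.cfle r'
    · intro r'
      show Function.update C.cf r (c + 1) r' ≤ numIn part r' - tg r'
      rcases eq_or_ne r' r with h | h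
      · subst h; rw [Function.update_self]; omega
      · rw [Function.update_of_ne h]; exact hok.cfng r'
    · show pend part C.v C.ct (Function.update C.cf r (c + 1)) ≤ 1
      rw [hp']; omega
    · intro h; rw [hfn] at h; cases h

lemma fire_sat (hok : CfgOk clause part tg C) (j : Fin m) (i : Fin n) (b : Bool)
    (hmem : (i, b) ∈ clause j) (hv : C.v i = some (b, true))
    (hfn : C.fn = false) (hcj : C.cj = j.castSucc) :
    enabled (satNet clause part tg) (cfgM part C) (.sat j i b)
    ∧ fire (satNet clause part tg) (cfgM part C) (.sat j i b)
        = cfgM part ⟨C.v, C.ct, C.cf, j.succ, C.fn⟩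
    ∧ CfgOk clause part tg ⟨C.v, C.ct, C.cf, j.succ, C.fn⟩ := by
  have hne : (j.castSucc : Fin (m + 1)) ≠ j.succ := by
    rw [Fin.ne_iff_vne]
    simp
  refine ⟨?_, ?_, ?_⟩
  · intro p
    cases b <;> cases p <;>
      simp only [satNet, satPre, cfgM, litPl, if_pos hmem, if_true, Bool.false_eq_true,
        if_false] <;>
      split_ifs <;> simp_all
  · funext p
    cases b <;> cases p <;>
      simp only [satNet, fire, satPre, satPost, cfgM, litPl, if_pos hmem, if_true,
        Bool.false_eq_true, if_false] <;>
      split_ifs <;> simp_all <;> omega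
  · refine ⟨hok.ctle, hok.cfle, hok.cttg, hok.cfng, hok.pd, ?_, ?_⟩
    · intro j' hj'
      have hj2 : j'.castSucc < j.succ := hj'
      have hle : j' ≤ j := Fin.castSucc_lt_succ_iff.mp hj2
      rcases lt_or_eq_of_le hle with h | h
      · exact hok.clj j' (by rw [hcj]; exact Fin.castSucc_lt_castSucc_iff.mpr h)
      · subst h
        exact ⟨(i, b), hmem, by rw [hv]; rfl⟩
    · intro h
      rw [show (⟨C.v, C.ct, C.cf, j.succ, C.fn⟩ : Cfg n m k).fn = C.fn from rfl, hfn] at h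
      cases h

lemma fire_fin (hok : CfgOk clause part tg C)
    (hfn : C.fn = false) (hcj : C.cj = Fin.last m)
    (hct : ∀ r, C.ct r = tg r) (hcf : ∀ r, C.cf r = numIn part r - tg r) :
    enabled (satNet clause part tg) (cfgM part C) .fin
    ∧ fire (satNet clause part tg) (cfgM part C) .fin
        = cfgM part ⟨C.v, C.ct, C.cf, C.cj, true⟩
    ∧ CfgOk clause part tg ⟨C.v, C.ct, C.cf, C.cj, true⟩ := by
  refine ⟨?_, ?_, ?_⟩
  · intro p
    cases p <;> simp only [satNet, satPre, cfgM] <;>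
      split_ifs <;> simp_all [hct, hcf]
  · funext p
    cases p <;> simp only [satNet, fire, satPre, satPost, cfgM] <;>
      split_ifs <;> simp_all [hct, hcf]
  · exact ⟨hok.ctle, hok.cfle, hok.cttg, hok.cfng, hok.pd, hok.clj,
      fun _ => ⟨fun r => ⟨hct r, hcf r⟩, hcj⟩⟩

end Steps

/-! ### Forward direction -/

section Forward

variable {clause : Fin m → Finset (Fin n × Bool)} {part : Fin n → Fin k} {tg : Fin k → ℕ}

lemma step_preserve {C : Cfg n m k} (hok : CfgOk clause part tg C) {M' : Pl n m k → ℕ}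
    (h : step (satNet clause part tg) (cfgM part C) M') :
    ∃ C', M' = cfgM part C' ∧ CfgOk clause part tg C' := by
  obtain ⟨τ, hen, rfl⟩ := h
  cases τ with
  | t i =>
      have hv : C.v i = none := by
        by_contra hne
        have h1 := hen (.q i)
        simp [satNet, satPre, cfgM, hne] at h1
      have hp : pend part C.v C.ct C.cf = 0 := by
        have h1 := hen (.s)
        simp [satNet, satPre, cfgM] at h1
        omega
      exact ⟨_, (fire_t hok i hv hp).2.1, (fire_t hok i hv hp).2.2⟩
  | f i =>
      have hv : C.v i = none := by
        by_contra hne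
        have h1 := hen (.q i)
        simp [satNet, satPre, cfgM, hne] at h1
      have hp : pend part C.v C.ct C.cf = 0 := by
        have h1 := hen (.s)
        simp [satNet, satPre, cfgM] at h1
        omega
      exact ⟨_, (fire_f hok i hv hp).2.1, (fire_f hok i hv hp).2.2⟩
  | td i =>
      have hv : C.v i = some (true, true) := by
        by_contra hne
        have h1 := hen (.x i)
        simp [satNet, satPre, cfgM, hne] at h1
      exact ⟨_, (fire_td hok i hv).2.1, (fire_td hok i hv).2.2⟩
  | fd i =>
      have hv : C.v i = some (false, true) := by
        by_contra hne
        have h1 := hen (.xb i)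
        simp [satNet, satPre, cfgM, hne] at h1
      exact ⟨_, (fire_fd hok i hv).2.1, (fire_fd hok i hv).2.2⟩
  | tc r c =>
      have hlt : c < tg r := by
        by_contra hge
        have h1 := hen (.tu r c)
        simp [satNet, satPre, cfgM, if_neg hge] at h1
        split_ifs at h1 <;> omega
      have hcd : C.fn = false ∧ c = C.ct r := by
        by_contra hne
        have h1 := hen (.tu r c)
        simp [satNet, satPre, cfgM, if_pos hlt, hne] at h1
      have hpnd : 1 ≤ cntT part C.v r - C.ct r := by
        have h1 := hen (.tup r)
        simpa [satNet, satPre, cfgM, if_pos hlt] using h1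
      exact ⟨_, (fire_tc hok r c hcd.1 hcd.2 hlt hpnd).2.1,
        (fire_tc hok r c hcd.1 hcd.2 hlt hpnd).2.2⟩
  | fc r c =>
      have hlt : c < numIn part r - tg r := by
        by_contra hge
        have h1 := hen (.fl r c)
        simp [satNet, satPre, cfgM, if_neg hge] at h1
        split_ifs at h1 <;> omega
      have hcd : C.fn = false ∧ c = C.cf r := by
        by_contra hne
        have h1 := hen (.fl r c)
        simp [satNet, satPre, cfgM, if_pos hlt, hne] at h1
      have hpnd : 1 ≤ cntF part C.v r - C.cf r := by
        have h1 := hen (.fup r)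
        simpa [satNet, satPre, cfgM, if_pos hlt] using h1
      exact ⟨_, (fire_fc hok r c hcd.1 hcd.2 hlt hpnd).2.1,
        (fire_fc hok r c hcd.1 hcd.2 hlt hpnd).2.2⟩
  | sat j i b =>
      have hmem : (i, b) ∈ clause j := by
        by_contra hne
        have h1 := hen (.cl j.castSucc)
        simp [satNet, satPre, cfgM, hne] at h1
        split_ifs at h1 <;> omega
      have hcd : C.fn = false ∧ j.castSucc = C.cj := by
        by_contra hne
        have h1 := hen (.cl j.castSucc)
        simp [satNet, satPre, cfgM, if_pos hmem, hne] at h1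
      have hv : C.v i = some (b, true) := by
        by_contra hne
        have h1 := hen (litPl i b)
        cases b <;> simp [satNet, satPre, cfgM, litPl, if_pos hmem, hne] at h1
      exact ⟨_, (fire_sat hok j i b hmem hv hcd.1 hcd.2.symm).2.1,
        (fire_sat hok j i b hmem hv hcd.1 hcd.2.symm).2.2⟩
  | fin =>
      have hcd : C.fn = false ∧ Fin.last m = C.cj := by
        by_contra hne
        have h1 := hen (.cl (Fin.last m))
        simp [satNet, satPre, cfgM, hne] at h1
      have hct : ∀ r, C.ct r = tg r := by
        intro r
        by_contra hne
        have h1 := hen (.tu r (tg r))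
        simp [satNet, satPre, cfgM, hcd.1] at h1
        split_ifs at h1 with h2
        · exact hne h2.symm
        · omega
      have hcf : ∀ r, C.cf r = numIn part r - tg r := by
        intro r
        by_contra hne
        have h1 := hen (.fl r (numIn part r - tg r))
        simp [satNet, satPre, cfgM, hcd.1] at h1
        split_ifs at h1 with h2
        · exact hne h2.symm
        · omega
      exact ⟨_, (fire_fin hok hcd.1 hcd.2.symm hct hcf).2.1,
        (fire_fin hok hcd.1 hcd.2.symm hct hcf).2.2⟩

lemma reach_cfg {M : Pl n m k → ℕ}
    (h : reachable (satNet clause part tg) satM0 M) :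
    ∃ C, M = cfgM part C ∧ CfgOk clause part tg C := by
  induction h with
  | refl =>
      refine ⟨⟨fun _ => none, fun _ => 0, fun _ => 0, 0, false⟩, ?_, ?_⟩
      · funext p
        cases p <;> simp [cfgM, satM0, cntT, cntF, pend, vval]
      · refine ⟨fun r => Nat.zero_le _, fun r => Nat.zero_le _,
          fun r => Nat.zero_le _, fun r => Nat.zero_le _, ?_, ?_, ?_⟩
        · simp [pend, cntT, cntF, vval]
        · intro j hj
          exact absurd hj (Fin.not_lt_zero _)
        · intro h; cases h
  | tail _ hstep ih =>
      obtain ⟨C, rfl, hok⟩ := ih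
      exact step_preserve hok hstep

lemma forward
    (h : reachable (satNet clause part tg) satM0 satMtgt) :
    GoodAssign clause part tg := by
  obtain ⟨C, heq, hok⟩ := reach_cfg h
  have hg := congrFun heq Pl.g
  have hfn : C.fn = true := by
    cases hfn : C.fn
    · simp [satMtgt, cfgM, hfn] at hg
    · rfl
  obtain ⟨hctcf, hcj⟩ := hok.fine hfn
  refine ⟨fun i => decide (vval (C.v i) = some true), ?_, ?_⟩
  · intro j
    obtain ⟨l, hl, hval⟩ := hok.clj j (hcj ▸ Fin.castSucc_lt_last j)
    refine ⟨l, hl, ?_⟩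
    cases hb : l.2 <;> rw [hb] at hval <;> simp [hval]
  · intro r
    have h1 : (Finset.univ.filter fun i => part i = r ∧
        (fun i => decide (vval (C.v i) = some true)) i = true).card = cntT part C.v r := by
      unfold cntT
      congr 1
      apply Finset.filter_congr
      intro i _
      simp
    have h2 := (hctcf r).1
    have h3 := (hctcf r).2
    have h4 := hok.ctle r
    have h5 := hok.cfle r
    have h6 := cnt_le part C.v r
    rw [h1]
    omega

end Forward

/-! ### Backward direction -/

section Backward

variable {clause : Fin m → Finset (Fin n × Bool)} {part : Fin n → Fin k} {tg : Fin k → ℕ}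

/-- Variable states when `S` is the set of processed variables and `D` the deleted ones. -/
def vSD (a : Fin n → Bool) (S D : Finset (Fin n)) : Fin n → VSt :=
  fun i => if i ∈ S then some (a i, decide (i ∉ D)) else none

def cfgA (a : Fin n → Bool) (part : Fin n → Fin k) (S D : Finset (Fin n))
    (cj : Fin (m + 1)) : Cfg n m k :=
  ⟨vSD a S D, fun r => cntT part (vSD a S D) r, fun r => cntF part (vSD a S D) r, cj, false⟩

lemma cntA_T (a : Fin n → Bool) (S D : Finset (Fin n)) (r : Fin k) :
    cntT part (vSD a S D) r = (S.filter fun i => part i = r ∧ a i = true).card := by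
  unfold cntT
  congr 1
  ext i
  by_cases hi : i ∈ S <;> simp [vSD, vval, hi] <;> tauto

lemma cntA_F (a : Fin n → Bool) (S D : Finset (Fin n)) (r : Fin k) :
    cntF part (vSD a S D) r = (S.filter fun i => part i = r ∧ a i = false).card := by
  unfold cntF
  congr 1
  ext i
  by_cases hi : i ∈ S <;> simp [vSD, vval, hi] <;> tauto

lemma card_split (a : Fin n → Bool) (r : Fin k) :
    (Finset.univ.filter fun i => part i = r ∧ a i = true).card
      + (Finset.univ.filter fun i => part i = r ∧ a i = false).card = numIn part r := by
  classical
  unfold numIn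
  rw [← Finset.card_union_of_disjoint]
  · congr 1
    ext i
    cases ha : a i <;> simp [ha]
  · rw [Finset.disjoint_left]
    intro i hi hi'
    simp only [Finset.mem_filter] at hi hi'
    rw [hi.2.2] at hi'
    simp at hi'

lemma pend_cfgA (a : Fin n → Bool) (S D : Finset (Fin n)) :
    pend part (vSD a S D) (fun r => cntT part (vSD a S D) r)
      (fun r => cntF part (vSD a S D) r) = 0 := by
  simp [pend]

lemma cfgA_ok (a : Fin n → Bool) (S D : Finset (Fin n)) (cj : Fin (m + 1))
    (htg : ∀ r, (Finset.univ.filter fun i => part i = r ∧ a i = true).card = tg r)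
    (hclj : ∀ j : Fin m, j.castSucc < cj → ∃ l ∈ clause j, l.1 ∈ S ∧ a l.1 = l.2) :
    CfgOk clause part tg (cfgA a part S D cj) := by
  refine ⟨fun r => le_refl _, fun r => le_refl _, ?_, ?_, ?_, ?_, ?_⟩
  · intro r
    show cntT part (vSD a S D) r ≤ tg r
    rw [cntA_T, ← htg r]
    exact Finset.card_le_card (Finset.filter_subset_filter _ (Finset.subset_univ S))
  · intro r
    show cntF part (vSD a S D) r ≤ numIn part r - tg r
    rw [cntA_F]
    have h1 := card_split (part := part) a r
    have h2 : (S.filter fun i => part i = r ∧ a i = false).card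
        ≤ (Finset.univ.filter fun i => part i = r ∧ a i = false).card :=
      Finset.card_le_card (Finset.filter_subset_filter _ (Finset.subset_univ S))
    have h3 := htg r
    omega
  · show pend part (vSD a S D) (fun r => cntT part (vSD a S D) r)
        (fun r => cntF part (vSD a S D) r) ≤ 1
    rw [pend_cfgA a S D]
    omega
  · intro j hj
    obtain ⟨l, hl, hlS, hla⟩ := hclj j hj
    refine ⟨l, hl, ?_⟩
    show vval (vSD a S D l.1) = some l.2
    simp [vSD, hlS, vval, hla]
  · intro h; cases h

lemma phase1 (a : Fin n → Bool)
    (htg : ∀ r, (Finset.univ.filter fun i => part i = r ∧ a i = true).card = tg r)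
    (S : Finset (Fin n)) :
    reachable (satNet clause part tg) satM0 (cfgM part (cfgA a part S ∅ (0 : Fin (m + 1)))) := by
  classical
  induction S using Finset.induction_on with
  | empty =>
      have hM : cfgM part (cfgA a part ∅ ∅ (0 : Fin (m + 1))) = satM0 := by
        funext p
        cases p <;> simp [cfgM, cfgA, satM0, vSD, cntT, cntF, pend, vval]
      rw [hM]
      exact Relation.ReflTransGen.refl
  | @insert i S hiS ih =>
      have hok : CfgOk clause part tg (cfgA a part S ∅ (0 : Fin (m + 1))) :=
        cfgA_ok a S ∅ (0 : Fin (m + 1)) htg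
          (fun j hj => absurd hj (Fin.not_lt_zero _))
      have hv0 : vSD a S ∅ i = none := by simp [vSD, hiS]
      have hv : (cfgA a part S ∅ (0 : Fin (m + 1))).v i = none := hv0
      have hp : pend part (cfgA a part S ∅ (0 : Fin (m + 1))).v
          (cfgA a part S ∅ (0 : Fin (m + 1))).ct (cfgA a part S ∅ (0 : Fin (m + 1))).cf = 0 :=
        pend_cfgA a S ∅
      cases ha : a i with
      | true =>
          obtain ⟨hen1, heq1, hok1⟩ := fire_t (C := cfgA a part S ∅ (0 : Fin (m + 1))) hok i hv hp
          have hveq : Function.update (vSD a S ∅) i (some (true, true))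
              = vSD a (insert i S) ∅ := by
            funext i'
            rcases eq_or_ne i' i with h | h <;>
              simp [h, Function.update_apply, vSD, ha, Finset.mem_insert]
          have hct3 : ∀ r', cntT part (vSD a (insert i S) ∅) r'
              = Function.update (fun r => cntT part (vSD a S ∅) r) (part i)
                  (cntT part (vSD a S ∅) (part i) + 1) r' := by
            intro r'
            rw [← hveq, cntT_update part hv0 true true r']
            rcases eq_or_ne r' (part i) with h | h
            · subst h; rw [Function.update_self]; simp
            · rw [Function.update_of_ne h]; simp [Ne.symm h]
          have hcf3 : ∀ r', cntF part (vSD a (insert i S) ∅) r' = cntF part (vSD a S ∅) r' := by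
            intro r'
            rw [← hveq, cntF_update part hv0 true true r']
            simp
          have hlt : cntT part (vSD a S ∅) (part i) < tg (part i) := by
            rw [cntA_T, ← htg (part i)]
            apply Finset.card_lt_card
            rw [Finset.ssubset_iff_of_subset
              (Finset.filter_subset_filter _ (Finset.subset_univ S))]
            exact ⟨i, by simp [ha], by simp [hiS]⟩
          have hpnd : 1 ≤ cntT part (Function.update (vSD a S ∅) i (some (true, true))) (part i)
              - cntT part (vSD a S ∅) (part i) := by
            rw [cntT_update part hv0 true true]
            simp
          obtain ⟨hen2, heq2, hok2⟩ := fire_tc (C := ⟨Function.update (vSD a S ∅) i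
              (some (true, true)), fun r => cntT part (vSD a S ∅) r,
              fun r => cntF part (vSD a S ∅) r, 0, false⟩) hok1 (part i)
            (cntT part (vSD a S ∅) (part i)) rfl rfl hlt hpnd
          have hC3 : (⟨Function.update (vSD a S ∅) i (some (true, true)),
              Function.update (fun r => cntT part (vSD a S ∅) r) (part i)
                (cntT part (vSD a S ∅) (part i) + 1),
              fun r => cntF part (vSD a S ∅) r, 0, false⟩ : Cfg n m k)
              = cfgA a part (insert i S) ∅ (0 : Fin (m + 1)) := by
            simp only [cfgA, Cfg.mk.injEq]
            exact ⟨hveq, funext fun r' => (hct3 r').symm, funext fun r' => (hcf3 r').symm,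
              trivial, trivial⟩
          have hs1 : step (satNet clause part tg)
              (cfgM part (cfgA a part S ∅ (0 : Fin (m + 1))))
              (cfgM part ⟨Function.update (vSD a S ∅) i (some (true, true)),
                fun r => cntT part (vSD a S ∅) r, fun r => cntF part (vSD a S ∅) r,
                0, false⟩) := ⟨.t i, hen1, heq1.symm⟩
          have hs2 : step (satNet clause part tg)
              (cfgM part ⟨Function.update (vSD a S ∅) i (some (true, true)),
                fun r => cntT part (vSD a S ∅) r, fun r => cntF part (vSD a S ∅) r,
                0, false⟩)
              (cfgM part (cfgA a part (insert i S) ∅ (0 : Fin (m + 1)))) :=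
            ⟨.tc (part i) (cntT part (vSD a S ∅) (part i)), hen2, by rw [heq2, hC3]⟩
          exact (ih.tail hs1).tail hs2
      | false =>
          obtain ⟨hen1, heq1, hok1⟩ := fire_f (C := cfgA a part S ∅ (0 : Fin (m + 1))) hok i hv hp
          have hveq : Function.update (vSD a S ∅) i (some (false, true))
              = vSD a (insert i S) ∅ := by
            funext i'
            rcases eq_or_ne i' i with h | h <;>
              simp [h, Function.update_apply, vSD, ha, Finset.mem_insert]
          have hcf3 : ∀ r', cntF part (vSD a (insert i S) ∅) r'
              = Function.update (fun r => cntF part (vSD a S ∅) r) (part i)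
                  (cntF part (vSD a S ∅) (part i) + 1) r' := by
            intro r'
            rw [← hveq, cntF_update part hv0 false true r']
            rcases eq_or_ne r' (part i) with h | h
            · subst h; rw [Function.update_self]; simp
            · rw [Function.update_of_ne h]; simp [Ne.symm h]
          have hct3 : ∀ r', cntT part (vSD a (insert i S) ∅) r' = cntT part (vSD a S ∅) r' := by
            intro r'
            rw [← hveq, cntT_update part hv0 false true r']
            simp
          have hlt : cntF part (vSD a S ∅) (part i) < numIn part (part i) - tg (part i) := by
            rw [cntA_F]
            have h1 := card_split (part := part) a (part i)
            have h3 := htg (part i)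
            have h2 : (S.filter fun i' => part i' = part i ∧ a i' = false).card
                < (Finset.univ.filter fun i' => part i' = part i ∧ a i' = false).card := by
              apply Finset.card_lt_card
              rw [Finset.ssubset_iff_of_subset
                (Finset.filter_subset_filter _ (Finset.subset_univ S))]
              exact ⟨i, by simp [ha], by simp [hiS]⟩
            omega
          have hpnd : 1 ≤ cntF part (Function.update (vSD a S ∅) i (some (false, true))) (part i)
              - cntF part (vSD a S ∅) (part i) := by
            rw [cntF_update part hv0 false true]
            simp
          obtain ⟨hen2, heq2, hok2⟩ := fire_fc (C := ⟨Function.update (vSD a S ∅) i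
              (some (false, true)), fun r => cntT part (vSD a S ∅) r,
              fun r => cntF part (vSD a S ∅) r, 0, false⟩) hok1 (part i)
            (cntF part (vSD a S ∅) (part i)) rfl rfl hlt hpnd
          have hC3 : (⟨Function.update (vSD a S ∅) i (some (false, true)),
              fun r => cntT part (vSD a S ∅) r,
              Function.update (fun r => cntF part (vSD a S ∅) r) (part i)
                (cntF part (vSD a S ∅) (part i) + 1), 0, false⟩ : Cfg n m k)
              = cfgA a part (insert i S) ∅ (0 : Fin (m + 1)) := by
            simp only [cfgA, Cfg.mk.injEq]
            exact ⟨hveq, funext fun r' => (hct3 r').symm, funext fun r' => (hcf3 r').symm,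
              trivial, trivial⟩
          have hs1 : step (satNet clause part tg)
              (cfgM part (cfgA a part S ∅ (0 : Fin (m + 1))))
              (cfgM part ⟨Function.update (vSD a S ∅) i (some (false, true)),
                fun r => cntT part (vSD a S ∅) r, fun r => cntF part (vSD a S ∅) r,
                0, false⟩) := ⟨.f i, hen1, heq1.symm⟩
          have hs2 : step (satNet clause part tg)
              (cfgM part ⟨Function.update (vSD a S ∅) i (some (false, true)),
                fun r => cntT part (vSD a S ∅) r, fun r => cntF part (vSD a S ∅) r,
                0, false⟩)
              (cfgM part (cfgA a part (insert i S) ∅ (0 : Fin (m + 1)))) :=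
            ⟨.fc (part i) (cntF part (vSD a S ∅) (part i)), hen2, by rw [heq2, hC3]⟩
          exact (ih.tail hs1).tail hs2

lemma phase2 (a : Fin n → Bool)
    (htg : ∀ r, (Finset.univ.filter fun i => part i = r ∧ a i = true).card = tg r)
    (hsat : ∀ j : Fin m, ∃ l ∈ clause j, a l.1 = l.2)
    (jn : ℕ) (hjn : jn ≤ m) :
    reachable (satNet clause part tg) satM0
      (cfgM part (cfgA a part Finset.univ ∅ ⟨jn, by omega⟩)) := by
  induction jn with
  | zero =>
      have h0 : (⟨0, by omega⟩ : Fin (m + 1)) = 0 := by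
        ext; simp
      rw [h0]
      exact phase1 a htg Finset.univ
  | succ jn ih =>
      have hjm : jn < m := by omega
      obtain ⟨l, hl, hla⟩ := hsat ⟨jn, hjm⟩
      have hok : CfgOk clause part tg (cfgA a part Finset.univ ∅ ⟨jn, by omega⟩) :=
        cfgA_ok a Finset.univ ∅ ⟨jn, by omega⟩ htg
          (fun j _ => by
            obtain ⟨l', hl', hla'⟩ := hsat j
            exact ⟨l', hl', Finset.mem_univ _, hla'⟩)
      have hv : (cfgA a part Finset.univ ∅ (⟨jn, by omega⟩ : Fin (m+1))).v l.1
          = some (l.2, true) := by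
        show vSD a Finset.univ ∅ l.1 = some (l.2, true)
        simp [vSD, hla]
      have hmem : (l.1, l.2) ∈ clause ⟨jn, hjm⟩ := by
        rw [Prod.mk.eta]; exact hl
      have hcj : (cfgA a part Finset.univ ∅ (⟨jn, by omega⟩ : Fin (m+1))).cj
          = (⟨jn, hjm⟩ : Fin m).castSucc := by
        show (⟨jn, by omega⟩ : Fin (m+1)) = _
        ext
        simp
      obtain ⟨hen, heq, hok'⟩ := fire_sat hok ⟨jn, hjm⟩ l.1 l.2 hmem hv rfl hcj
      have hC' : (⟨(cfgA a part Finset.univ ∅ (⟨jn, by omega⟩ : Fin (m+1))).v,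
          (cfgA a part Finset.univ ∅ (⟨jn, by omega⟩ : Fin (m+1))).ct,
          (cfgA a part Finset.univ ∅ (⟨jn, by omega⟩ : Fin (m+1))).cf,
          (⟨jn, hjm⟩ : Fin m).succ,
          (cfgA a part Finset.univ ∅ (⟨jn, by omega⟩ : Fin (m+1))).fn⟩ : Cfg n m k)
          = cfgA a part Finset.univ ∅ ⟨jn + 1, by omega⟩ := by
        refine Cfg.ext' rfl rfl rfl ?_ rfl
        show (⟨jn, hjm⟩ : Fin m).succ = (⟨jn + 1, by omega⟩ : Fin (m + 1))
        ext
        simp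
      exact (ih (by omega)).tail ⟨.sat ⟨jn, hjm⟩ l.1 l.2, hen, by rw [heq, hC']⟩

lemma phase3 (a : Fin n → Bool)
    (htg : ∀ r, (Finset.univ.filter fun i => part i = r ∧ a i = true).card = tg r)
    (hsat : ∀ j : Fin m, ∃ l ∈ clause j, a l.1 = l.2)
    (D : Finset (Fin n)) :
    reachable (satNet clause part tg) satM0
      (cfgM part (cfgA a part Finset.univ D (Fin.last m))) := by
  classical
  have hokgen : ∀ D' : Finset (Fin n),
      CfgOk clause part tg (cfgA a part Finset.univ D' (Fin.last m)) := fun D' =>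
    cfgA_ok a Finset.univ D' (Fin.last m) htg
      (fun j _ => by
        obtain ⟨l', hl', hla'⟩ := hsat j
        exact ⟨l', hl', Finset.mem_univ _, hla'⟩)
  induction D using Finset.induction_on with
  | empty =>
      have h0 : (Fin.last m) = (⟨m, by omega⟩ : Fin (m + 1)) := rfl
      rw [h0]
      exact phase2 a htg hsat m (le_refl m)
  | @insert i D hiD ih =>
      have hok := hokgen D
      cases ha : a i with
      | true =>
          have hv : (cfgA a part Finset.univ D (Fin.last m)).v i = some (true, true) := by
            show vSD a Finset.univ D i = some (true, true)
            simp [vSD, hiD, ha]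
          obtain ⟨hen, heq, hok'⟩ := fire_td hok i hv
          have hveqt : Function.update (vSD a Finset.univ D) i (some (true, false))
              = vSD a Finset.univ (insert i D) := by
            funext i'
            rcases eq_or_ne i' i with h | h <;>
              simp [h, Function.update_apply, vSD, Finset.mem_insert, ha]
          have hvvt : ∀ i', vval (Function.update (vSD a Finset.univ D) i
              (some (true, false)) i') = vval (vSD a Finset.univ D i') := by
            intro i'
            rcases eq_or_ne i' i with h | h <;>
              simp [h, Function.update_apply, vSD, vval, hiD, ha]
          have hC' : (⟨Function.update (cfgA a part Finset.univ D (Fin.last m)).v i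
              (some (true, false)),
              (cfgA a part Finset.univ D (Fin.last m)).ct,
              (cfgA a part Finset.univ D (Fin.last m)).cf,
              (cfgA a part Finset.univ D (Fin.last m)).cj,
              (cfgA a part Finset.univ D (Fin.last m)).fn⟩ : Cfg n m k)
              = cfgA a part Finset.univ (insert i D) (Fin.last m) := by
            refine Cfg.ext' hveqt ?_ ?_ rfl rfl
            · show (fun r => cntT part (vSD a Finset.univ D) r)
                = fun r => cntT part (vSD a Finset.univ (insert i D)) r
              funext r
              rw [← hveqt]
              exact (cntT_congr part hvvt r).symm
            · show (fun r => cntF part (vSD a Finset.univ D) r)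
                = fun r => cntF part (vSD a Finset.univ (insert i D)) r
              funext r
              rw [← hveqt]
              exact (cntF_congr part hvvt r).symm
          exact ih.tail ⟨.td i, hen, by rw [heq, hC']⟩
      | false =>
          have hv : (cfgA a part Finset.univ D (Fin.last m)).v i = some (false, true) := by
            show vSD a Finset.univ D i = some (false, true)
            simp [vSD, hiD, ha]
          obtain ⟨hen, heq, hok'⟩ := fire_fd hok i hv
          have hveqt : Function.update (vSD a Finset.univ D) i (some (false, false))
              = vSD a Finset.univ (insert i D) := by
            funext i'
            rcases eq_or_ne i' i with h | h <;>
              simp [h, Function.update_apply, vSD, Finset.mem_insert, ha]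
          have hvvt : ∀ i', vval (Function.update (vSD a Finset.univ D) i
              (some (false, false)) i') = vval (vSD a Finset.univ D i') := by
            intro i'
            rcases eq_or_ne i' i with h | h <;>
              simp [h, Function.update_apply, vSD, vval, hiD, ha]
          have hC' : (⟨Function.update (cfgA a part Finset.univ D (Fin.last m)).v i
              (some (false, false)),
              (cfgA a part Finset.univ D (Fin.last m)).ct,
              (cfgA a part Finset.univ D (Fin.last m)).cf,
              (cfgA a part Finset.univ D (Fin.last m)).cj,
              (cfgA a part Finset.univ D (Fin.last m)).fn⟩ : Cfg n m k)
              = cfgA a part Finset.univ (insert i D) (Fin.last m) := by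
            refine Cfg.ext' hveqt ?_ ?_ rfl rfl
            · show (fun r => cntT part (vSD a Finset.univ D) r)
                = fun r => cntT part (vSD a Finset.univ (insert i D)) r
              funext r
              rw [← hveqt]
              exact (cntT_congr part hvvt r).symm
            · show (fun r => cntF part (vSD a Finset.univ D) r)
                = fun r => cntF part (vSD a Finset.univ (insert i D)) r
              funext r
              rw [← hveqt]
              exact (cntF_congr part hvvt r).symm
          exact ih.tail ⟨.fd i, hen, by rw [heq, hC']⟩

lemma backward (h : GoodAssign clause part tg) :
    reachable (satNet clause part tg) satM0 satMtgt := by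
  classical
  obtain ⟨a, hsat, htg⟩ := h
  have hreach := phase3 a htg hsat Finset.univ
  have hok : CfgOk clause part tg (cfgA a part Finset.univ Finset.univ (Fin.last m)) :=
    cfgA_ok a Finset.univ Finset.univ (Fin.last m) htg
      (fun j _ => by
        obtain ⟨l', hl', hla'⟩ := hsat j
        exact ⟨l', hl', Finset.mem_univ _, hla'⟩)
  have hct : ∀ r, (cfgA a part Finset.univ Finset.univ (Fin.last m)).ct r = tg r := by
    intro r
    show cntT part (vSD a Finset.univ Finset.univ) r = tg r
    rw [cntA_T]
    simpa using htg r
  have hcf : ∀ r, (cfgA a part Finset.univ Finset.univ (Fin.last m)).cf r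
      = numIn part r - tg r := by
    intro r
    show cntF part (vSD a Finset.univ Finset.univ) r = numIn part r - tg r
    rw [cntA_F]
    have h1 := card_split (part := part) a r
    have h2 := htg r
    have h3 : (Finset.univ.filter fun i => part i = r ∧ a i = false).card
        = (Finset.univ.filter fun i => part i = r ∧ a i = false).card := rfl
    omega
  obtain ⟨hen, heq, hok'⟩ := fire_fin hok rfl rfl hct hcf
  have hM : cfgM part (⟨(cfgA a part Finset.univ Finset.univ (Fin.last m)).v,
      (cfgA a part Finset.univ Finset.univ (Fin.last m)).ct,
      (cfgA a part Finset.univ Finset.univ (Fin.last m)).cf,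
      (cfgA a part Finset.univ Finset.univ (Fin.last m)).cj, true⟩ : Cfg n m k) = satMtgt := by
    funext p
    cases p <;> simp [cfgM, cfgA, satMtgt, vSD, pend, vval]
  exact hreach.tail ⟨.fin, hen, by rw [heq, hM]⟩

end Backward
/-- Correctness of the reduction from `p-Pw-Sat` to reachability in 1-safe Petri nets:
the target marking is reachable from the initial marking iff the instance has a
satisfying assignment meeting all the targets. -/
theorem satNet_reach_iff_goodAssign
    (clause : Fin m → Finset (Fin n × Bool)) (part : Fin n → Fin k)
    (tg : Fin k → ℕ) :
    reachable (satNet clause part tg) satM0 satMtgt ↔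
      GoodAssign clause part tg :=
  ⟨forward, backward⟩
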